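/- Let l1, l2 ≥ 0 be integers with 3 dividing l1 + 2·l2, and put b = (l1 + 2·l2)/3 and a = min(l1, l2). Then the number of semistandard Young tableaux of shape (l1+l2, l2) (rows weakly increasing, columns strictly increasing) with all entries in {0, 1, 2} such that each of the values 0, 1 and 2 occurs exactly b times equals a + 1. -/

import Mathlib

open MvPolynomial Finset

private lemma dc_mem_iff (S : Finset ℕ) (h : ∀ i j, i ≤ j → j ∈ S → i ∈ S) (j : ℕ) :
    j ∈ S ↔ j < S.card := by
  constructor
  · intro hj
    have hsub : range (j + 1) ⊆ S := fun i hi => h i j (by have := mem_range.mp hi; omega) hj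
    have := Finset.card_le_card hsub
    simpa using this
  · intro hj
    by_contra hns
    have hsub : S ⊆ range j := by
      intro i hi
      rw [mem_range]
      by_contra hij
      exact hns (h j i (by omega) hi)
    have := Finset.card_le_card hsub
    simp at this; omega

private lemma mem_mu {l1 l2 : ℕ} (hs : List.SortedGE [l1 + l2, l2]) (i j : ℕ) :
    ((i, j) ∈ YoungDiagram.ofRowLens [l1 + l2, l2] hs) ↔
      (i = 0 ∧ j < l1 + l2) ∨ (i = 1 ∧ j < l2) := by
  rw [YoungDiagram.mem_ofRowLens]
  constructor
  · rintro ⟨h1, h2⟩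
    simp only [List.length_cons, List.length_nil] at h1
    interval_cases i
    · left; exact ⟨rfl, by simpa using h2⟩
    · right; exact ⟨rfl, by simpa using h2⟩
  · rintro (⟨rfl, h⟩ | ⟨rfl, h⟩) <;> exact ⟨by simp, by simpa⟩

private lemma card_filter_mu {l1 l2 : ℕ} (hs : List.SortedGE [l1 + l2, l2])
    (p : ℕ × ℕ → Prop) [DecidablePred p] :
    (((YoungDiagram.ofRowLens [l1 + l2, l2] hs).cells).filter p).card =
      ((range (l1 + l2)).filter (fun j => p (0, j))).card +
      ((range l2).filter (fun j => p (1, j))).card := by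
  have hcells : (YoungDiagram.ofRowLens [l1 + l2, l2] hs).cells =
      (range (l1 + l2)).map ⟨fun j => ((0 : ℕ), j), fun a b h => by simpa using h⟩ ∪
      (range l2).map ⟨fun j => ((1 : ℕ), j), fun a b h => by simpa using h⟩ := by
    ext ⟨i, j⟩
    simp only [YoungDiagram.mem_cells, mem_mu hs, mem_union, mem_map,
      Function.Embedding.coeFn_mk, mem_range, Prod.mk.injEq]
    constructor
    · rintro (⟨rfl, h⟩ | ⟨rfl, h⟩)
      · exact Or.inl ⟨j, h, rfl⟩
      · exact Or.inr ⟨j, h, rfl⟩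
    · rintro (⟨x, h, rfl, rfl⟩ | ⟨x, h, rfl, rfl⟩)
      · exact Or.inl ⟨rfl, h⟩
      · exact Or.inr ⟨rfl, h⟩
  rw [hcells, filter_union, card_union_of_disjoint, filter_map, filter_map,
    card_map, card_map]
  · rfl
  · rw [Finset.disjoint_left]
    rintro ⟨i, j⟩ h1 h2
    simp only [mem_filter, mem_map, Function.Embedding.coeFn_mk, Prod.mk.injEq] at h1 h2
    obtain ⟨⟨x, _, hx, _⟩, _⟩ := h1
    obtain ⟨⟨y, _, hy, _⟩, _⟩ := h2

private def ent (l1 l2 b t : ℕ) (i j : ℕ) : ℕ :=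
  if i = 0 then
    (if j < b then 0 else if j < 2 * b - t then 1 else if j < l1 + l2 then 2 else 0)
  else if i = 1 ∧ j < l2 then (if j < t then 1 else 2) else 0

private def tab (l1 l2 b t : ℕ) (hs : List.SortedGE [l1 + l2, l2])
    (hdiv : l1 + 2 * l2 = 3 * b) (h1 : l2 ≤ b + t) (h2 : t ≤ l2) (h3 : t ≤ b)
    (h4 : l2 + t ≤ 2 * b) :
    SemistandardYoungTableau (YoungDiagram.ofRowLens [l1 + l2, l2] hs) where
  entry := ent l1 l2 b t
  row_weak' := by
    intro i j1 j2 hj hcell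
    rw [mem_mu hs] at hcell
    unfold ent
    rcases hcell with ⟨rfl, h⟩ | ⟨rfl, h⟩ <;> split_ifs <;> first | exact absurd trivial (by assumption) | exact (‹False›).elim | omega
  col_strict' := by
    intro i1 i2 j hi hcell
    rw [mem_mu hs] at hcell
    rcases hcell with ⟨rfl, h⟩ | ⟨rfl, h⟩
    · omega
    · have hi1 : i1 = 0 := by omega
      subst hi1
      unfold ent
      split_ifs <;> first | exact absurd trivial (by assumption) | exact (‹False›).elim | omega
  zeros' := by
    intro i j hcell
    rw [mem_mu hs] at hcell
    unfold ent
    split_ifs <;> first | exact absurd trivial (by assumption) | exact (‹False›).elim | omega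

@[simp] private lemma tab_apply (l1 l2 b t : ℕ) (hs : List.SortedGE [l1 + l2, l2])
    (hdiv : l1 + 2 * l2 = 3 * b) (h1 : l2 ≤ b + t) (h2 : t ≤ l2) (h3 : t ≤ b)
    (h4 : l2 + t ≤ 2 * b) (i j : ℕ) :
    tab l1 l2 b t hs hdiv h1 h2 h3 h4 i j = ent l1 l2 b t i j := rfl

private lemma filter_interval_card (n u v : ℕ) (hv : v ≤ n) :
    ((range n).filter (fun j => u ≤ j ∧ j < v)).card = v - u := by
  have h : (range n).filter (fun j => u ≤ j ∧ j < v) = Finset.Ico u v := by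
    ext j; simp only [mem_filter, mem_range, Finset.mem_Ico]; omega
  rw [h, Nat.card_Ico]

private lemma ent_lt3 (l1 l2 b t i j : ℕ) : ent l1 l2 b t i j < 3 := by
  unfold ent; split_ifs <;> omega

private lemma tab_counts (l1 l2 b t : ℕ) (hs : List.SortedGE [l1 + l2, l2])
    (hdiv : l1 + 2 * l2 = 3 * b) (h1 : l2 ≤ b + t) (h2 : t ≤ l2) (h3 : t ≤ b)
    (h4 : l2 + t ≤ 2 * b) (v : ℕ) (hv : v < 3) :
    (((YoungDiagram.ofRowLens [l1 + l2, l2] hs).cells).filter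
      (fun c => ent l1 l2 b t c.1 c.2 = v)).card = b := by
  rw [card_filter_mu hs]
  have e0 : ((range (l1 + l2)).filter (fun j => ent l1 l2 b t 0 j = v)).card =
      (if v = 0 then b else if v = 1 then 2 * b - t else l1 + l2) -
      (if v = 0 then 0 else if v = 1 then b else 2 * b - t) := by
    rw [filter_congr (q := fun j =>
        (if v = 0 then 0 else if v = 1 then b else 2 * b - t) ≤ j ∧
        j < (if v = 0 then b else if v = 1 then 2 * b - t else l1 + l2)) ?_,
      filter_interval_card]
    · split_ifs <;> omega
    · intro j hj
      rw [mem_range] at hj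
      unfold ent
      split_ifs <;> omega
  have e1 : ((range l2).filter (fun j => ent l1 l2 b t 1 j = v)).card =
      (if v = 0 then 0 else if v = 1 then t else l2) -
      (if v = 0 then 0 else if v = 1 then 0 else t) := by
    rw [filter_congr (q := fun j =>
        (if v = 0 then 0 else if v = 1 then 0 else t) ≤ j ∧
        j < (if v = 0 then 0 else if v = 1 then t else l2)) ?_,
      filter_interval_card]
    · split_ifs <;> omega
    · intro j hj
      rw [mem_range] at hj
      unfold ent
      split_ifs <;> first | exact (‹False›).elim | omega
  rw [e0, e1]
  split_ifs <;> omega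

private lemma ent_row1 (l1 l2 b t j : ℕ) (hj : j < l2) :
    ent l1 l2 b t 1 j = if j < t then 1 else 2 := by
  unfold ent
  rw [if_neg one_ne_zero, if_pos ⟨rfl, hj⟩]

private lemma tab_mem (l1 l2 b t : ℕ) (hs : List.SortedGE [l1 + l2, l2])
    (hdiv : l1 + 2 * l2 = 3 * b) (h1 : l2 ≤ b + t) (h2 : t ≤ l2) (h3 : t ≤ b)
    (h4 : l2 + t ≤ 2 * b) :
    (∀ c ∈ (YoungDiagram.ofRowLens [l1 + l2, l2] hs).cells,
        (tab l1 l2 b t hs hdiv h1 h2 h3 h4) c.1 c.2 < 3) ∧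
      ∀ v < 3, ((YoungDiagram.ofRowLens [l1 + l2, l2] hs).cells.filter
        (fun c => (tab l1 l2 b t hs hdiv h1 h2 h3 h4) c.1 c.2 = v)).card = b := by
  have hcoe : ⇑(tab l1 l2 b t hs hdiv h1 h2 h3 h4) = ent l1 l2 b t := rfl
  rw [hcoe]
  exact ⟨fun c _ => ent_lt3 l1 l2 b t c.1 c.2,
    fun v hv => tab_counts l1 l2 b t hs hdiv h1 h2 h3 h4 v hv⟩

set_option maxHeartbeats 1000000 in
theorem stmt16 (l1 l2 b a : ℕ) (hdiv : l1 + 2 * l2 = 3 * b) (ha : a = min l1 l2)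
    (hs : List.SortedGE [l1 + l2, l2]) :
    Nat.card {T : SemistandardYoungTableau (YoungDiagram.ofRowLens [l1 + l2, l2] hs) //
      (∀ c ∈ (YoungDiagram.ofRowLens [l1 + l2, l2] hs).cells, T c.1 c.2 < 3) ∧
      ∀ v < 3, ((YoungDiagram.ofRowLens [l1 + l2, l2] hs).cells.filter
        (fun c => T c.1 c.2 = v)).card = b} = a + 1 := by
  have hcon : ∀ k : Fin (a + 1), l2 ≤ b + (l2 - b + ↑k) ∧ (l2 - b + ↑k) ≤ l2 ∧
      (l2 - b + ↑k) ≤ b ∧ l2 + (l2 - b + ↑k) ≤ 2 * b := by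
    intro k; have := k.isLt; omega
  set f : Fin (a + 1) → {T : SemistandardYoungTableau (YoungDiagram.ofRowLens [l1 + l2, l2] hs) //
      (∀ c ∈ (YoungDiagram.ofRowLens [l1 + l2, l2] hs).cells, T c.1 c.2 < 3) ∧
      ∀ v < 3, ((YoungDiagram.ofRowLens [l1 + l2, l2] hs).cells.filter
        (fun c => T c.1 c.2 = v)).card = b} := fun k =>
    ⟨tab l1 l2 b (l2 - b + ↑k) hs hdiv (hcon k).1 (hcon k).2.1 (hcon k).2.2.1 (hcon k).2.2.2,
      tab_mem l1 l2 b (l2 - b + ↑k) hs hdiv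
        (hcon k).1 (hcon k).2.1 (hcon k).2.2.1 (hcon k).2.2.2⟩ with hf
  have hbij : Function.Bijective f := by
    constructor
    · intro k1 k2 hk
      have he : ent l1 l2 b (l2 - b + ↑k1) = ent l1 l2 b (l2 - b + ↑k2) :=
        congrArg SemistandardYoungTableau.entry (congrArg Subtype.val hk)
      have hk1 := k1.isLt
      have hk2 := k2.isLt
      have hcc1 := hcon k1
      have hcc2 := hcon k2
      rcases Nat.lt_trichotomy (l2 - b + ↑k1) (l2 - b + ↑k2) with hlt | heq | hlt
      · have h2 := congrFun (congrFun he 1) (l2 - b + ↑k1)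
        rw [ent_row1 l1 l2 b _ _ (by omega), ent_row1 l1 l2 b _ _ (by omega)] at h2
        split_ifs at h2 <;> omega
      · exact Fin.ext (by omega)
      · have h2 := congrFun (congrFun he 1) (l2 - b + ↑k2)
        rw [ent_row1 l1 l2 b _ _ (by omega), ent_row1 l1 l2 b _ _ (by omega)] at h2
        split_ifs at h2 <;> omega
    · rintro ⟨T, hlt3, hcnt⟩
      -- basic facts
      have hlt0 : ∀ j, j < l1 + l2 → T 0 j < 3 := fun j hj =>
        hlt3 (0, j) ((YoungDiagram.mem_cells _).mpr ((mem_mu hs 0 j).mpr (Or.inl ⟨rfl, hj⟩)))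
      have h12 : ∀ j, j < l2 → 1 ≤ T 1 j ∧ T 1 j < 3 := by
        intro j hj
        have hc : ((1 : ℕ), j) ∈ YoungDiagram.ofRowLens [l1 + l2, l2] hs :=
          (mem_mu hs 1 j).mpr (Or.inr ⟨rfl, hj⟩)
        have hcs := T.col_strict Nat.zero_lt_one hc
        have hb3 : T 1 j < 3 := hlt3 (1, j) ((YoungDiagram.mem_cells _).mpr hc)
        omega
      -- row 1 structure
      set t := ((range l2).filter (fun j => T 1 j = 1)).card with htdef
      have hT1 : ∀ j, j < l2 → (T 1 j = 1 ↔ j < t) := by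
        intro j hj
        rw [htdef, ← dc_mem_iff _ ?_ j, mem_filter, mem_range]
        · exact ⟨fun hh => ⟨hj, hh⟩, fun hh => hh.2⟩
        · intro i j' hij hj'
          rw [mem_filter, mem_range] at hj' ⊢
          obtain ⟨hjl, hj1⟩ := hj'
          have hil : i < l2 := lt_of_le_of_lt hij hjl
          have hle : T 1 i ≤ T 1 j' := T.row_weak_of_le hij ((mem_mu hs 1 j').mpr (Or.inr ⟨rfl, hjl⟩))
          have := (h12 i hil).1
          exact ⟨hil, by omega⟩
      have ht_l2 : t ≤ l2 := le_trans (card_filter_le _ _) (by simp)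
      -- row 0 structure
      set x0 := ((range (l1 + l2)).filter (fun j => T 0 j = 0)).card with hx0def
      have hT0 : ∀ j, j < l1 + l2 → (T 0 j = 0 ↔ j < x0) := by
        intro j hj
        rw [hx0def, ← dc_mem_iff _ ?_ j, mem_filter, mem_range]
        · exact ⟨fun hh => ⟨hj, hh⟩, fun hh => hh.2⟩
        · intro i j' hij hj'
          rw [mem_filter, mem_range] at hj' ⊢
          obtain ⟨hjl, hj1⟩ := hj'
          have hle : T 0 i ≤ T 0 j' := T.row_weak_of_le hij ((mem_mu hs 0 j').mpr (Or.inl ⟨rfl, hjl⟩))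
          exact ⟨lt_of_le_of_lt hij hjl, by omega⟩
      set x01 := ((range (l1 + l2)).filter (fun j => T 0 j ≤ 1)).card with hx01def
      have hT01 : ∀ j, j < l1 + l2 → (T 0 j ≤ 1 ↔ j < x01) := by
        intro j hj
        rw [hx01def, ← dc_mem_iff _ ?_ j, mem_filter, mem_range]
        · exact ⟨fun hh => ⟨hj, hh⟩, fun hh => hh.2⟩
        · intro i j' hij hj'
          rw [mem_filter, mem_range] at hj' ⊢
          obtain ⟨hjl, hj1⟩ := hj'
          have hle : T 0 i ≤ T 0 j' := T.row_weak_of_le hij ((mem_mu hs 0 j').mpr (Or.inl ⟨rfl, hjl⟩))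
          exact ⟨lt_of_le_of_lt hij hjl, by omega⟩
      have hx01_le : x01 ≤ l1 + l2 := le_trans (card_filter_le _ _) (by simp)
      have hx0x01 : x0 ≤ x01 := by
        apply Finset.card_le_card
        intro j hj
        rw [mem_filter] at hj ⊢
        exact ⟨hj.1, by omega⟩
      -- count equations
      have hc0 : ((range (l1 + l2)).filter (fun j => T 0 j = 0)).card +
          ((range l2).filter (fun j => T 1 j = 0)).card = b := by
        rw [← hcnt 0 (by norm_num)]; exact (card_filter_mu hs (fun c => T c.1 c.2 = 0)).symm
      have hc1 : ((range (l1 + l2)).filter (fun j => T 0 j = 1)).card +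
          ((range l2).filter (fun j => T 1 j = 1)).card = b := by
        rw [← hcnt 1 (by norm_num)]; exact (card_filter_mu hs (fun c => T c.1 c.2 = 1)).symm
      have hc2 : ((range (l1 + l2)).filter (fun j => T 0 j = 2)).card +
          ((range l2).filter (fun j => T 1 j = 2)).card = b := by
        rw [← hcnt 2 (by norm_num)]; exact (card_filter_mu hs (fun c => T c.1 c.2 = 2)).symm
      have c10 : ((range l2).filter (fun j => T 1 j = 0)).card = 0 := by
        rw [Finset.card_eq_zero, filter_eq_empty_iff]
        intro j hj; have := h12 j (mem_range.mp hj); omega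
      have c01 : ((range (l1 + l2)).filter (fun j => T 0 j = 1)).card = x01 - x0 := by
        rw [filter_congr (q := fun j => x0 ≤ j ∧ j < x01) ?_, filter_interval_card _ _ _ hx01_le]
        intro j hj
        rw [mem_range] at hj
        have h0 := hT0 j hj
        have h01 := hT01 j hj
        omega
      have c02 : ((range (l1 + l2)).filter (fun j => T 0 j = 2)).card = (l1 + l2) - x01 := by
        rw [filter_congr (q := fun j => x01 ≤ j ∧ j < l1 + l2) ?_,
          filter_interval_card _ _ _ (le_refl _)]
        intro j hj
        rw [mem_range] at hj
        have h01 := hT01 j hj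
        have h3 := hlt0 j hj
        omega
      have c12 : ((range l2).filter (fun j => T 1 j = 2)).card = l2 - t := by
        rw [filter_congr (q := fun j => t ≤ j ∧ j < l2) ?_, filter_interval_card _ _ _ (le_refl _)]
        intro j hj
        rw [mem_range] at hj
        have h1 := hT1 j hj
        have hh := h12 j hj
        omega
      rw [c10] at hc0
      rw [c01, ← htdef] at hc1
      rw [c02, c12] at hc2
      have hx0b : x0 = b := by omega
      have hl2x01 : l2 ≤ x01 := by
        rcases Nat.eq_zero_or_pos l2 with hz | hz
        · omega
        · have hc : ((1 : ℕ), l2 - 1) ∈ YoungDiagram.ofRowLens [l1 + l2, l2] hs :=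
            (mem_mu hs 1 (l2 - 1)).mpr (Or.inr ⟨rfl, by omega⟩)
          have hcs := T.col_strict Nat.zero_lt_one hc
          have hh := h12 (l2 - 1) (by omega)
          have h01 := hT01 (l2 - 1) (by omega)
          omega
      -- the parameter is in range
      refine ⟨⟨t - (l2 - b), by omega⟩, ?_⟩
      apply Subtype.ext
      apply SemistandardYoungTableau.ext
      intro i j
      show ent l1 l2 b (l2 - b + (t - (l2 - b))) i j = T i j
      rw [show l2 - b + (t - (l2 - b)) = t by omega]
      match i with
      | 0 =>
        by_cases hj1 : j < l1 + l2
        · have h0 := hT0 j hj1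
          have h01 := hT01 j hj1
          have h3 := hlt0 j hj1
          unfold ent
          split_ifs <;> omega
        · have hz : T 0 j = 0 := T.zeros (by rw [mem_mu hs]; omega)
          unfold ent
          split_ifs <;> omega
      | 1 =>
        by_cases hj : j < l2
        · have h1 := hT1 j hj
          have hh := h12 j hj
          unfold ent
          split_ifs <;> first | exact (‹False›).elim | omega
        · have hz : T 1 j = 0 := T.zeros (by rw [mem_mu hs]; omega)
          unfold ent
          split_ifs <;> first | exact (‹False›).elim | omega
      | (n + 2) =>
        have hz : T (n + 2) j = 0 := T.zeros (by rw [mem_mu hs]; omega)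
        unfold ent
        split_ifs <;> first | exact (‹False›).elim | omega
  rw [← Nat.card_eq_of_bijective f hbij, Nat.card_eq_fintype_card, Fintype.card_fin]
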